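/- For all A ∈ SL₂±(ℝ): ‖A²‖₂ ≤ 2·ρ(A)·‖A‖₂, where ‖·‖₂ is the Euclidean operator norm and ρ the spectral radius. -/

import Mathlib

open Complex Matrix UpperHalfPlane

lemma im_moebius_aux (a b c d : ℝ) (z : ℂ) (hz : z.im ≠ 0) (hdet : a * d - b * c ≠ 0) :
    (((a : ℂ) * z + b) / ((c : ℂ) * z + d)).im
      = (a * d - b * c) * z.im / Complex.normSq ((c : ℂ) * z + d) := by
  have hden : ((c : ℂ) * z + d) ≠ 0 := by
    intro h
    have him : c * z.im = 0 := by
      have := congrArg Complex.im h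
      simpa using this
    have hc : c = 0 := by
      rcases mul_eq_zero.1 him with h' | h'
      · exact h'
      · exact absurd h' hz
    have hre : c * z.re + d = 0 := by
      have := congrArg Complex.re h
      simpa using this
    have hd : d = 0 := by simpa [hc] using hre
    exact hdet (by simp [hc, hd])
  rw [Complex.div_im]
  have hnsq : Complex.normSq ((c : ℂ) * z + d) ≠ 0 := by
    simpa [Complex.normSq_eq_zero] using hden
  rw [← sub_div]
  congr 1
  simp only [add_im, add_re, mul_im, mul_re, ofReal_re, ofReal_im]
  ring

lemma im_moebius_pos (a b c d : ℝ) (z : ℂ) (hz : z.im ≠ 0)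
    (hdet : 0 < (a * d - b * c) * z.im) :
    0 < (((a : ℂ) * z + b) / ((c : ℂ) * z + d)).im := by
  have hdet' : a * d - b * c ≠ 0 := by
    intro h; rw [h] at hdet; simp at hdet
  rw [im_moebius_aux a b c d z hz hdet']
  have hden : ((c : ℂ) * z + d) ≠ 0 := by
    intro h
    have him : c * z.im = 0 := by
      have := congrArg Complex.im h
      simpa using this
    have hc : c = 0 := by
      rcases mul_eq_zero.1 him with h' | h'
      · exact h'
      · exact absurd h' hz
    have hre : c * z.re + d = 0 := by
      have := congrArg Complex.re h
      simpa using this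
    have hd : d = 0 := by simpa [hc] using hre
    exact hdet' (by simp [hc, hd])
  have : 0 < Complex.normSq ((c : ℂ) * z + d) := Complex.normSq_pos.2 hden
  positivity

/-- The (anti-)Möbius action of a matrix with determinant `±1` on `ℂ`:
`z ↦ (az+b)/(cz+d)` if `det = 1`, and `z ↦ (az̄+b)/(cz̄+d)` otherwise. -/
noncomputable def moebiusMap (A : Matrix (Fin 2) (Fin 2) ℝ) (z : ℂ) : ℂ :=
  if A.det = 1 then
    ((A 0 0 : ℂ) * z + A 0 1) / ((A 1 0 : ℂ) * z + A 1 1)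
  else
    ((A 0 0 : ℂ) * (starRingEnd ℂ z) + A 0 1) / ((A 1 0 : ℂ) * (starRingEnd ℂ z) + A 1 1)

lemma moebiusMap_im_pos (A : Matrix (Fin 2) (Fin 2) ℝ)
    (hA : A.det = 1 ∨ A.det = -1) (z : ℍ) : 0 < (moebiusMap A (z : ℂ)).im := by
  have hdet2 : A.det = A 0 0 * A 1 1 - A 0 1 * A 1 0 := Matrix.det_fin_two A
  by_cases hd : A.det = 1
  · rw [moebiusMap, if_pos hd]
    apply im_moebius_pos _ _ _ _ _ (ne_of_gt z.2)
    rw [← hdet2, hd]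
    simpa using z.2
  · rw [moebiusMap, if_neg hd]
    have hdm : A.det = -1 := hA.resolve_left hd
    have hzc : ((starRingEnd ℂ) (z : ℂ)).im = -(z : ℂ).im := by simp
    apply im_moebius_pos
    · rw [hzc]; simpa using ne_of_gt z.2
    · rw [hzc, ← hdet2, hdm]; simpa using z.2

/-- The isometry of the hyperbolic plane `ℍ` induced by a matrix of
determinant `±1` (for other matrices we take the identity as junk value). -/
noncomputable def moebius (A : Matrix (Fin 2) (Fin 2) ℝ) (z : ℍ) : ℍ :=
  if h : A.det = 1 ∨ A.det = -1 then ⟨moebiusMap A (z : ℂ), moebiusMap_im_pos A h z⟩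
  else z

/-- The Euclidean operator norm of a `2 × 2` real matrix. -/
noncomputable def l2OpNorm (A : Matrix (Fin 2) (Fin 2) ℝ) : ℝ :=
  ‖Matrix.toEuclideanCLM (𝕜 := ℝ) A‖

/-- The spectral radius of a real matrix (computed over `ℂ`, so that complex
eigenvalues are taken into account). -/
noncomputable def specRad (A : Matrix (Fin 2) (Fin 2) ℝ) : ℝ :=
  (spectralRadius ℂ (A.map (algebraMap ℝ ℂ))).toReal

lemma spec_iff (A : Matrix (Fin 2) (Fin 2) ℝ) (z : ℂ) :
    z ∈ spectrum ℂ (A.map (algebraMap ℝ ℂ)) ↔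
      z^2 - ((A 0 0 : ℂ) + (A 1 1 : ℂ)) * z + (A.det : ℂ) = 0 := by
  rw [spectrum.mem_iff, Matrix.isUnit_iff_isUnit_det, isUnit_iff_ne_zero, not_ne_iff,
    Matrix.det_fin_two, A.det_fin_two]
  simp only [Matrix.sub_apply, Matrix.map_apply, Matrix.algebraMap_matrix_apply]
  push_cast
  norm_num
  constructor <;> intro h <;> linear_combination h

lemma specRad_eq (A : Matrix (Fin 2) (Fin 2) ℝ) (r₁ r₂ : ℂ)
    (hsum : r₁ + r₂ = (A 0 0 : ℂ) + A 1 1) (hprod : r₁ * r₂ = (A.det : ℂ)) :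
    specRad A = max ‖r₁‖ ‖r₂‖ := by
  have hspec : spectrum ℂ (A.map (algebraMap ℝ ℂ)) = {r₁, r₂} := by
    ext z
    rw [spec_iff]
    constructor
    · intro h
      have : (z - r₁) * (z - r₂) = 0 := by linear_combination h - z * hsum + hprod
      rcases mul_eq_zero.1 this with h | h
      · exact Or.inl (sub_eq_zero.1 h)
      · exact Or.inr (sub_eq_zero.1 h)
    · rintro (rfl | rfl)
      · linear_combination z * hsum - hprod
      · linear_combination z * hsum - hprod
  rw [specRad, spectralRadius, hspec]
  rw [show ({r₁, r₂} : Set ℂ) = insert r₁ {r₂} from rfl]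
  rw [iSup_insert, iSup_singleton]
  simp [ENNReal.toReal_max]

lemma opNorm_le_bound' (M : Matrix (Fin 2) (Fin 2) ℝ) (C : ℝ) (hC : 0 ≤ C)
    (h : M 0 0^2 + M 0 1^2 + M 1 0^2 + M 1 1^2 ≤ C^2) : l2OpNorm M ≤ C := by
  rw [l2OpNorm]
  apply ContinuousLinearMap.opNorm_le_bound _ hC
  intro x
  have key : ∀ i, (Matrix.toEuclideanCLM (𝕜 := ℝ) M x) i = M i 0 * x 0 + M i 1 * x 1 := by
    intro i
    show (M.mulVec (WithLp.equiv _ _ x)) i = _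
    simp [Matrix.mulVec, dotProduct, Fin.sum_univ_two]
  have h1 : ‖(Matrix.toEuclideanCLM (𝕜 := ℝ) M) x‖
      = Real.sqrt ((M 0 0 * x 0 + M 0 1 * x 1)^2 + (M 1 0 * x 0 + M 1 1 * x 1)^2) := by
    rw [EuclideanSpace.norm_eq]
    simp [Fin.sum_univ_two, key, _root_.sq_abs]
  have h2 : ‖x‖ = Real.sqrt ((x 0)^2 + (x 1)^2) := by
    rw [EuclideanSpace.norm_eq]
    simp [Fin.sum_univ_two, _root_.sq_abs]
  rw [h1, h2]
  rw [show C * Real.sqrt ((x 0)^2 + (x 1)^2) = Real.sqrt (C^2 * ((x 0)^2 + (x 1)^2)) by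
    rw [Real.sqrt_mul (by positivity), Real.sqrt_sq hC]]
  apply Real.sqrt_le_sqrt
  nlinarith [sq_nonneg (M 0 0 * x 1 - M 0 1 * x 0), sq_nonneg (M 1 0 * x 1 - M 1 1 * x 0),
    sq_nonneg (x 0), sq_nonneg (x 1), sq_nonneg (M 1 0 * x 0 + M 1 1 * x 1), sq_nonneg (M 0 0 * x 0 + M 0 1 * x 1)]

open scoped Matrix.Norms.L2Operator in
lemma mulVec_le (M : Matrix (Fin 2) (Fin 2) ℝ) (v : Fin 2 → ℝ) :
    Real.sqrt (((M.mulVec v) 0)^2 + ((M.mulVec v) 1)^2) ≤ l2OpNorm M * Real.sqrt ((v 0)^2 + (v 1)^2) := by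
  have h := Matrix.l2_opNorm_mulVec M ((WithLp.equiv 2 (Fin 2 → ℝ)).symm v)
  have e1 : ‖(EuclideanSpace.equiv (Fin 2) ℝ).symm (M.mulVec ((WithLp.equiv 2 (Fin 2 → ℝ)).symm v : Fin 2 → ℝ))‖
      = Real.sqrt (((M.mulVec v) 0)^2 + ((M.mulVec v) 1)^2) := by
    rw [EuclideanSpace.norm_eq]
    simp [Fin.sum_univ_two, _root_.sq_abs]
  have e2 : ‖(WithLp.equiv 2 (Fin 2 → ℝ)).symm v‖ = Real.sqrt ((v 0)^2 + (v 1)^2) := by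
    rw [EuclideanSpace.norm_eq]
    simp [Fin.sum_univ_two, _root_.sq_abs]
  have e3 : ‖M‖ = l2OpNorm M := Matrix.cstar_norm_def M
  rw [e1, e2, e3] at h
  exact h

lemma eig_le (M : Matrix (Fin 2) (Fin 2) ℝ) (lam : ℝ) (v : Fin 2 → ℝ) (hv : v ≠ 0)
    (h : M.mulVec v = lam • v) : |lam| ≤ l2OpNorm M := by
  have hvv : 0 < Real.sqrt ((v 0)^2 + (v 1)^2) := by
    have h0 : (v 0)^2 + (v 1)^2 ≠ 0 := by
      intro h0
      apply hv
      have hv0 : v 0 = 0 := by nlinarith [sq_nonneg (v 0), sq_nonneg (v 1)]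
      have hv1 : v 1 = 0 := by nlinarith [sq_nonneg (v 0), sq_nonneg (v 1)]
      funext i; fin_cases i <;> assumption
    have : 0 < (v 0)^2 + (v 1)^2 := lt_of_le_of_ne (by positivity) (Ne.symm h0)
    positivity
  have key := mulVec_le M v
  rw [h] at key
  have e : Real.sqrt (((lam • v) 0)^2 + ((lam • v) 1)^2) = |lam| * Real.sqrt ((v 0)^2 + (v 1)^2) := by
    simp only [Pi.smul_apply, smul_eq_mul]
    rw [show (lam * v 0)^2 + (lam * v 1)^2 = lam^2 * ((v 0)^2 + (v 1)^2) by ring,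
      Real.sqrt_mul (sq_nonneg _), Real.sqrt_sq_eq_abs]
  rw [e] at key
  exact le_of_mul_le_mul_right key hvv

lemma exists_eigvec (M : Matrix (Fin 2) (Fin 2) ℝ) (lam : ℝ)
    (h : lam^2 - (M 0 0 + M 1 1) * lam + (M 0 0 * M 1 1 - M 0 1 * M 1 0) = 0) :
    ∃ v : Fin 2 → ℝ, v ≠ 0 ∧ M.mulVec v = lam • v := by
  by_cases h01 : M 0 1 ≠ 0
  · refine ⟨![M 0 1, lam - M 0 0], ?_, ?_⟩
    · intro hv
      exact h01 (by simpa using congrFun hv 0)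
    · funext i
      fin_cases i
      · simp only [Fin.mk_zero, Fin.mk_one, Matrix.mulVec, dotProduct, Fin.sum_univ_two, Matrix.cons_val_zero,
          Matrix.cons_val_one, Matrix.head_cons, Pi.smul_apply, smul_eq_mul]
        ring
      · simp only [Fin.mk_zero, Fin.mk_one, Matrix.mulVec, dotProduct, Fin.sum_univ_two, Matrix.cons_val_zero,
          Matrix.cons_val_one, Matrix.head_cons, Pi.smul_apply, smul_eq_mul]
        linear_combination -h
  · push_neg at h01
    by_cases h10 : M 1 0 ≠ 0
    · refine ⟨![lam - M 1 1, M 1 0], ?_, ?_⟩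
      · intro hv
        exact h10 (by simpa using congrFun hv 1)
      · funext i
        fin_cases i
        · simp only [Fin.mk_zero, Fin.mk_one, Matrix.mulVec, dotProduct, Fin.sum_univ_two, Matrix.cons_val_zero,
            Matrix.cons_val_one, Matrix.head_cons, Pi.smul_apply, smul_eq_mul]
          linear_combination -h
        · simp only [Fin.mk_zero, Fin.mk_one, Matrix.mulVec, dotProduct, Fin.sum_univ_two, Matrix.cons_val_zero,
            Matrix.cons_val_one, Matrix.head_cons, Pi.smul_apply, smul_eq_mul]
          ring
    · push_neg at h10
      have hfac : (lam - M 0 0) * (lam - M 1 1) = 0 := by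
        rw [h01, h10] at h; linear_combination h
      rcases mul_eq_zero.1 hfac with h' | h'
      · have h0 : lam = M 0 0 := by linarith [sub_eq_zero.1 h']
        refine ⟨![1, 0], ?_, ?_⟩
        · intro hv; simpa using congrFun hv 0
        · funext i
          fin_cases i <;>
            simp [Fin.mk_zero, Fin.mk_one, Matrix.mulVec, dotProduct, Fin.sum_univ_two, h01, h10, h0]
      · have h0 : lam = M 1 1 := by linarith [sub_eq_zero.1 h']
        refine ⟨![0, 1], ?_, ?_⟩
        · intro hv; simpa using congrFun hv 1
        · funext i
          fin_cases i <;>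
            simp [Fin.mk_zero, Fin.mk_one, Matrix.mulVec, dotProduct, Fin.sum_univ_two, h01, h10, h0]

set_option maxHeartbeats 1000000 in
lemma key_ineq (t d s F ρ : ℝ) (hd : d = 1 ∨ d = -1) (hρ1 : 1 ≤ ρ) (hρs : ρ ≤ s)
    (ht : |t| ≤ ρ + d / ρ) (hF : F ≤ s^2 + 1/s^2) (hF2 : 2 ≤ F) (hs1 : 1 ≤ s) :
    t^2 * F - 2*d*t^2 + 2 ≤ (2*ρ*s)^2 := by
  have hρ0 : 0 < ρ := by linarith
  have hs0 : 0 < s := by linarith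
  have ht2 : t^2 ≤ (ρ + d/ρ)^2 := by
    nlinarith [mul_self_le_mul_self (_root_.abs_nonneg t) ht, _root_.sq_abs t]
  have hFd : 0 ≤ F - 2*d := by rcases hd with rfl | rfl <;> linarith
  have hstep : t^2 * F - 2*d*t^2 + 2 ≤ (ρ + d/ρ)^2 * (F - 2*d) + 2 := by
    nlinarith [mul_le_mul_of_nonneg_right ht2 hFd]
  refine hstep.trans ?_
  have h2 : (ρ + d/ρ)^2 * (F - 2*d) ≤ (ρ + d/ρ)^2 * (s^2 + 1/s^2 - 2*d) :=
    mul_le_mul_of_nonneg_left (by linarith) (sq_nonneg _)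
  have hu : (1:ℝ) ≤ ρ^2 := by nlinarith
  have hv1 : (1:ℝ) ≤ s^2 := by nlinarith
  have hv : ρ^2 ≤ s^2 := by nlinarith
  have A1 : ρ^2 * (1/s^2) ≤ 1 := by rw [mul_one_div]; exact div_le_one_of_le₀ hv (by positivity)
  have A2 : (1/ρ^2) * s^2 ≤ s^2 := by
    have h : (1:ℝ)/ρ^2 ≤ 1 := div_le_one_of_le₀ hu (by positivity)
    have := mul_le_mul_of_nonneg_right h (le_of_lt (by positivity : (0:ℝ) < s^2))
    linarith
  have A3 : (1/ρ^2) * (1/s^2) ≤ 1 := by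
    rw [div_mul_div_comm, one_mul]
    exact div_le_one_of_le₀ (by nlinarith) (by positivity)
  have A4 : 1/s^2 ≤ 1 := div_le_one_of_le₀ hv1 (by positivity)
  have A5 : s^2 ≤ ρ^2 * s^2 := le_mul_of_one_le_left (by positivity) hu
  have A6 : ρ^2 ≤ ρ^2 * s^2 := le_mul_of_one_le_right (by positivity) hv1
  have A7 : (0:ℝ) < 1/ρ^2 := by positivity
  have A8 : 1/ρ^2 ≤ 1 := div_le_one_of_le₀ hu (by positivity)
  have A9 : (0:ℝ) < 1/s^2 := by positivity
  have expand : (ρ + d/ρ)^2 = ρ^2 + 2*d + d^2 * (1/ρ^2) := by field_simp; ring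
  refine le_trans (by linarith : _ ≤ (ρ + d/ρ)^2 * (s^2 + 1/s^2 - 2*d) + 2) ?_
  rw [expand]
  rcases hd with rfl | rfl
  · nlinarith [A1, A2, A3, A4, A5, hu]
  · nlinarith [A1, A2, A3, A6, A8, hu, hv1, A9]

open scoped Matrix.Norms.L2Operator in
lemma opNorm_conj_mul (A : Matrix (Fin 2) (Fin 2) ℝ) :
    l2OpNorm (A.conjTranspose * A) = l2OpNorm A * l2OpNorm A :=
  Matrix.l2_opNorm_conjTranspose_mul_self A


lemma aux_sq4 (F : ℝ) (h : 2 ≤ F) : (4:ℝ) ≤ F^2 := by nlinarith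

lemma aux_F_le (F s lam : ℝ) (h1 : 1 ≤ lam) (h2 : lam ≤ s*s) (hs0 : 0 ≤ s)
    (hq : lam^2 - F*lam + 1 = 0) : 1 ≤ s ∧ F ≤ s^2 + 1/s^2 := by
  have hs1 : 1 ≤ s := by nlinarith
  refine ⟨hs1, ?_⟩
  have hlam0 : (0:ℝ) < lam := by linarith
  have hs2 : (0:ℝ) < s^2 := by positivity
  have hkey : (0:ℝ) ≤ (s^2 - lam) * (lam * s^2 - 1) :=
    mul_nonneg (by nlinarith) (by nlinarith)
  have e2 : (1/s^2) * s^2 = 1 := by field_simp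
  have hmul : F * (lam * s^2) ≤ (s^2 + 1/s^2) * (lam * s^2) := by
    nlinarith [hkey, hq, e2]
  exact le_of_mul_le_mul_right hmul (by positivity)

lemma aux_sqrt (n R : ℝ) (hn : 0 ≤ n) (hR : 0 ≤ R) (h : n ≤ Real.sqrt R) : n^2 ≤ R := by
  nlinarith [Real.sq_sqrt hR, Real.sqrt_nonneg R]

lemma aux_rho1 (x y ρ : ℝ) (hx : 0 ≤ x) (hy : 0 ≤ y) (hm1 : x ≤ ρ) (hm2 : y ≤ ρ)
    (hxy : x * y = 1) : 1 ≤ ρ := by nlinarith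

lemma aux_sqeq1 (x : ℝ) (h : x^2 = 1) (h0 : 0 ≤ x) : x = 1 := by nlinarith

lemma aux_abslt2 (t : ℝ) (h : t^2 < 4) : |t| < 2 := by
  rw [_root_.abs_lt]; constructor <;> nlinarith

lemma aux_final (n ρ s : ℝ) (hn : 0 ≤ n) (hρ : 0 ≤ ρ) (hs : 0 ≤ s)
    (h : n^2 ≤ (2*ρ*s)^2) : n ≤ 2*ρ*s := by nlinarith [mul_nonneg (mul_nonneg (by norm_num : (0:ℝ) ≤ 2) hρ) hs]

set_option maxHeartbeats 1000000 in
/-- For all `A ∈ SL₂±(ℝ)`: `‖A²‖₂ ≤ 2 ρ(A) ‖A‖₂`. -/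
theorem stmt15 (A : Matrix (Fin 2) (Fin 2) ℝ) (hA : A.det = 1 ∨ A.det = -1) :
    l2OpNorm (A * A) ≤ 2 * specRad A * l2OpNorm A := by
  have hdet : A.det = A 0 0 * A 1 1 - A 0 1 * A 1 0 := Matrix.det_fin_two A
  have hd2 : A.det ^ 2 = 1 := by rcases hA with h | h <;> rw [h] <;> norm_num
  set s := l2OpNorm A with hs_def
  set ρ := specRad A with hρ_def
  have hs0 : 0 ≤ s := norm_nonneg _
  have hF2 : 2 ≤ A 0 0^2 + A 0 1^2 + A 1 0^2 + A 1 1^2 := by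
    rcases hA with h | h <;> rw [hdet] at h <;>
      nlinarith [sq_nonneg (A 0 0 - A 1 1), sq_nonneg (A 0 0 + A 1 1),
        sq_nonneg (A 0 1 + A 1 0), sq_nonneg (A 0 1 - A 1 0)]
  set F := A 0 0^2 + A 0 1^2 + A 1 0^2 + A 1 1^2 with hF_def
  -- entries of Aᵀ * A
  have hG00 : (A.conjTranspose * A) 0 0 = A 0 0 * A 0 0 + A 1 0 * A 1 0 := by
    simp [Matrix.mul_apply, Matrix.conjTranspose_apply, Fin.sum_univ_two]
  have hG01 : (A.conjTranspose * A) 0 1 = A 0 0 * A 0 1 + A 1 0 * A 1 1 := by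
    simp [Matrix.mul_apply, Matrix.conjTranspose_apply, Fin.sum_univ_two]
  have hG10 : (A.conjTranspose * A) 1 0 = A 0 1 * A 0 0 + A 1 1 * A 1 0 := by
    simp [Matrix.mul_apply, Matrix.conjTranspose_apply, Fin.sum_univ_two]
  have hG11 : (A.conjTranspose * A) 1 1 = A 0 1 * A 0 1 + A 1 1 * A 1 1 := by
    simp [Matrix.mul_apply, Matrix.conjTranspose_apply, Fin.sum_univ_two]
  have hF4 : (4:ℝ) ≤ F^2 := aux_sq4 F hF2
  have hx2 : Real.sqrt (F^2 - 4) ^ 2 = F^2 - 4 := Real.sq_sqrt (by linarith)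
  have hx0 : 0 ≤ Real.sqrt (F^2 - 4) := Real.sqrt_nonneg _
  set lam := (F + Real.sqrt (F^2 - 4)) / 2 with hlam_def
  have hlam1 : 1 ≤ lam := by rw [hlam_def]; linarith
  have hlam_quad : lam^2 - F*lam + 1 = 0 := by
    rw [hlam_def]; linear_combination (1/4 : ℝ) * hx2
  have hd2' : (A 0 0 * A 1 1 - A 0 1 * A 1 0)^2 = 1 := by rw [← hdet]; exact hd2
  have hgev : ∃ v, v ≠ 0 ∧ (A.conjTranspose * A).mulVec v = lam • v := by
    apply exists_eigvec
    rw [hG00, hG01, hG10, hG11]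
    linear_combination hlam_quad + lam * hF_def + hd2'
  obtain ⟨v, hv0, hvec⟩ := hgev
  have hlam_le : lam ≤ s * s := by
    have h := eig_le _ _ _ hv0 hvec
    rw [opNorm_conj_mul] at h
    calc lam = |lam| := (_root_.abs_of_nonneg (by linarith)).symm
      _ ≤ s * s := h
  obtain ⟨hs1, hFle⟩ := aux_F_le F s lam hlam1 hlam_le hs0 hlam_quad
  -- bound on ‖A*A‖²
  have hAA0 : 0 ≤ l2OpNorm (A*A) := norm_nonneg _
  have hAA : l2OpNorm (A*A) ^ 2 ≤ (A 0 0 + A 1 1)^2 * F - 2*A.det*(A 0 0 + A 1 1)^2 + 2 := by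
    have hmul00 : (A*A) 0 0 = A 0 0*A 0 0 + A 0 1*A 1 0 := by
      simp [Matrix.mul_apply, Fin.sum_univ_two]
    have hmul01 : (A*A) 0 1 = A 0 0*A 0 1 + A 0 1*A 1 1 := by
      simp [Matrix.mul_apply, Fin.sum_univ_two]
    have hmul10 : (A*A) 1 0 = A 1 0*A 0 0 + A 1 1*A 1 0 := by
      simp [Matrix.mul_apply, Fin.sum_univ_two]
    have hmul11 : (A*A) 1 1 = A 1 0*A 0 1 + A 1 1*A 1 1 := by
      simp [Matrix.mul_apply, Fin.sum_univ_two]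
    have hfrob : (A*A) 0 0^2 + (A*A) 0 1^2 + (A*A) 1 0^2 + (A*A) 1 1^2
        = (A 0 0 + A 1 1)^2 * F - 2*A.det*(A 0 0 + A 1 1)^2 + 2 := by
      rw [hmul00, hmul01, hmul10, hmul11]
      linear_combination (-(A 0 0 + A 1 1)^2) * hF_def + (2*(A 0 0 + A 1 1)^2) * hdet + 2 * hd2'
    have hC0 : 0 ≤ (A 0 0 + A 1 1)^2 * F - 2*A.det*(A 0 0 + A 1 1)^2 + 2 := by
      rw [← hfrob]; positivity
    have hb := opNorm_le_bound' (A*A) (Real.sqrt ((A 0 0 + A 1 1)^2 * F - 2*A.det*(A 0 0 + A 1 1)^2 + 2))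
      (Real.sqrt_nonneg _) (by rw [Real.sq_sqrt hC0]; exact le_of_eq hfrob)
    exact aux_sqrt _ _ hAA0 hC0 hb
  -- spectral radius facts
  have hρ_facts : 1 ≤ ρ ∧ ρ ≤ s ∧ |A 0 0 + A 1 1| ≤ ρ + A.det/ρ := by
    by_cases hΔ : 0 ≤ (A 0 0 + A 1 1)^2 - 4*A.det
    · set t := A 0 0 + A 1 1 with ht_def
      set x := Real.sqrt (t^2 - 4*A.det) with hx_def
      have hxx2 : x^2 = t^2 - 4*A.det := Real.sq_sqrt hΔ
      have hxx0 : 0 ≤ x := Real.sqrt_nonneg _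
      have htC : (t:ℂ) = (A 0 0 : ℂ) + A 1 1 := by rw [ht_def]; push_cast; ring
      have hρ_eq : ρ = max |(t+x)/2| |(t-x)/2| := by
        rw [hρ_def, specRad_eq A (((t+x)/2 : ℝ) : ℂ) (((t-x)/2 : ℝ) : ℂ) ?_ ?_]
        · rw [Complex.norm_real, Complex.norm_real, Real.norm_eq_abs, Real.norm_eq_abs]
        · rw [← htC]; push_cast; ring
        · have : ((t+x)/2 : ℝ) * ((t-x)/2) = A.det := by linear_combination (-(1:ℝ)/4)*hxx2
          rw [← Complex.ofReal_mul, this]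
      have habsdet : |(t+x)/2| * |(t-x)/2| = 1 := by
        rw [← _root_.abs_mul, show ((t+x)/2)*((t-x)/2) = A.det by linear_combination (-(1:ℝ)/4)*hxx2]
        rcases hA with h | h <;> rw [h] <;> norm_num
      have hm1 : |(t+x)/2| ≤ ρ := hρ_eq ▸ le_max_left _ _
      have hm2 : |(t-x)/2| ≤ ρ := hρ_eq ▸ le_max_right _ _
      have hρ0' : 0 ≤ ρ := le_trans (_root_.abs_nonneg _) hm1
      have hρ1 : 1 ≤ ρ := aux_rho1 _ _ _ (_root_.abs_nonneg ((t+x)/2)) (_root_.abs_nonneg ((t-x)/2)) hm1 hm2 habsdet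
      have heig : ∀ r : ℝ, r^2 - t*r + A.det = 0 → |r| ≤ s := by
        intro r hr
        obtain ⟨w, hw0, hwv⟩ := exists_eigvec A r (by
          rw [← ht_def, ← hdet]  -- goal: r^2 - (A 0 0 + A 1 1)*r + (A 0 0*A 1 1 - A 0 1*A 1 0) = 0
          exact hr)
        exact eig_le A r w hw0 hwv
      have hr1 : |(t+x)/2| ≤ s := heig _ (by linear_combination (1/4:ℝ)*hxx2)
      have hr2 : |(t-x)/2| ≤ s := heig _ (by linear_combination (1/4:ℝ)*hxx2)
      have hρs : ρ ≤ s := by rw [hρ_eq]; exact max_le hr1 hr2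
      have hq : ρ^2 - |t| * ρ + A.det = 0 := by
        rcases le_total 0 t with h | h
        · have h1 : |(t-x)/2| ≤ (t+x)/2 := by
            rw [_root_.abs_le]; constructor <;> linarith
          have h2 : |(t+x)/2| = (t+x)/2 := _root_.abs_of_nonneg (by linarith)
          rw [hρ_eq, h2, max_eq_left h1, _root_.abs_of_nonneg h]
          linear_combination (1/4:ℝ)*hxx2
        · have h1 : |(t+x)/2| ≤ (x-t)/2 := by
            rw [_root_.abs_le]; constructor <;> linarith
          have h2 : |(t-x)/2| = (x-t)/2 := by
            rw [_root_.abs_of_nonpos (by linarith)]; ring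
          rw [hρ_eq, h2, max_eq_right (h2 ▸ h1), _root_.abs_of_nonpos h]
          linear_combination (1/4:ℝ)*hxx2
      refine ⟨hρ1, hρs, ?_⟩
      have hρpos : (0:ℝ) < ρ := by linarith
      have : |t| = ρ + A.det/ρ := by
        field_simp
        linear_combination -hq
      linarith [le_of_eq this]
    · push_neg at hΔ
      have hd1 : A.det = 1 := by
        rcases hA with h | h
        · exact h
        · exfalso; rw [h] at hΔ; linarith [sq_nonneg (A 0 0 + A 1 1)]
      set t := A 0 0 + A 1 1 with ht_def
      have ht4 : t^2 < 4 := by rw [hd1] at hΔ; linarith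
      set y := Real.sqrt (4 - t^2) with hy_def
      have hy2 : y^2 = 4 - t^2 := Real.sq_sqrt (by linarith)
      have hy0 : 0 ≤ y := Real.sqrt_nonneg _
      have htC : (t:ℂ) = (A 0 0 : ℂ) + A 1 1 := by rw [ht_def]; push_cast; ring
      have hy2C : (y:ℂ)^2 = 4 - (t:ℂ)^2 := by exact_mod_cast congrArg Complex.ofReal hy2
      have hρ_eq : ρ = max ‖((t/2 : ℝ) : ℂ) + ((y/2 : ℝ) : ℂ)*Complex.I‖ ‖((t/2 : ℝ) : ℂ) - ((y/2 : ℝ) : ℂ)*Complex.I‖ := by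
        rw [hρ_def, specRad_eq A _ _ ?_ ?_]
        · rw [← htC]; push_cast; ring
        · rw [hd1]
          push_cast
          linear_combination ((1:ℂ)/4) * hy2C - ((y:ℂ)^2/4) * Complex.I_sq
      have hn1 : ‖((t/2 : ℝ) : ℂ) + ((y/2 : ℝ) : ℂ)*Complex.I‖ = 1 := by
        have h := Complex.normSq_add_mul_I (t/2) (y/2)
        have h2 : Complex.normSq (((t/2 : ℝ) : ℂ) + ((y/2 : ℝ) : ℂ)*Complex.I) = 1 := by
          rw [h]; linear_combination (1/4:ℝ)*hy2
        have h3 := Complex.sq_norm (((t/2 : ℝ) : ℂ) + ((y/2 : ℝ) : ℂ)*Complex.I)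
        rw [h2] at h3
        have h4 : (0:ℝ) ≤ ‖((t/2 : ℝ) : ℂ) + ((y/2 : ℝ) : ℂ)*Complex.I‖ := norm_nonneg _
        have : ‖((t/2 : ℝ) : ℂ) + ((y/2 : ℝ) : ℂ)*Complex.I‖ = 1 := aux_sqeq1 _ h3 h4
        exact this
      have hn2 : ‖((t/2 : ℝ) : ℂ) - ((y/2 : ℝ) : ℂ)*Complex.I‖ = 1 := by
        have h : ((t/2 : ℝ) : ℂ) - ((y/2 : ℝ) : ℂ)*Complex.I
            = ((t/2 : ℝ) : ℂ) + ((-(y/2) : ℝ) : ℂ)*Complex.I := by push_cast; ring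
        rw [h]
        have h2 : Complex.normSq (((t/2 : ℝ) : ℂ) + ((-(y/2) : ℝ) : ℂ)*Complex.I) = 1 := by
          rw [Complex.normSq_add_mul_I]; linear_combination (1/4:ℝ)*hy2
        have h3 := Complex.sq_norm (((t/2 : ℝ) : ℂ) + ((-(y/2) : ℝ) : ℂ)*Complex.I)
        rw [h2] at h3
        have h4 : (0:ℝ) ≤ ‖((t/2 : ℝ) : ℂ) + ((-(y/2) : ℝ) : ℂ)*Complex.I‖ := norm_nonneg _
        have : ‖((t/2 : ℝ) : ℂ) + ((-(y/2) : ℝ) : ℂ)*Complex.I‖ = 1 := aux_sqeq1 _ h3 h4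
        exact this
      have hρval : ρ = 1 := by rw [hρ_eq, hn1, hn2]; simp
      refine ⟨le_of_eq hρval.symm, hρval ▸ hs1, ?_⟩
      rw [hρval, hd1]
      have : |t| < 2 := aux_abslt2 t ht4
      norm_num
      linarith
  obtain ⟨hρ1, hρs, htb⟩ := hρ_facts
  have hkey := key_ineq (A 0 0 + A 1 1) A.det s F ρ hA hρ1 hρs htb hFle hF2 hs1
  have hfin : l2OpNorm (A*A)^2 ≤ (2*ρ*s)^2 := le_trans hAA hkey
  exact aux_final _ _ _ hAA0 (by linarith) hs0 hfin
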